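/- Let X be a set, H = ℓ²(X), and κ ⊆ X × X. Let S(κ) be the weak*-closed span of the matrix units E_{x,y} for (x,y) ∈ κ. Then an operator T ∈ B(H) belongs to S(κ) if and only if its matrix entries satisfy ⟨T e_y, e_x⟩ = 0 for all (x,y) ∉ κ. -/

import Mathlib

set_option maxHeartbeats 1000000

open scoped InnerProductSpace

noncomputable section

/-- The canonical basis vector `e_x` of `ℓ²(X)`. -/
def basisVec {X : Type*} [DecidableEq X] (x : X) : lp (fun _ : X => ℂ) 2 :=
  lp.single 2 x 1

/-- The matrix unit `E_{x,y}` on `ℓ²(X)`, sending `e_y` to `e_x`. -/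
def matrixUnit {X : Type*} [DecidableEq X] (x y : X) :
    lp (fun _ : X => ℂ) 2 →L[ℂ] lp (fun _ : X => ℂ) 2 :=
  (innerSL ℂ (basisVec y)).smulRight (basisVec x)

/-- `S(κ)`: the weak*-closed (weak operator topology closed) span of the matrix units
`E_{x,y}`, `(x,y) ∈ κ`, in `B(ℓ²(X))`. -/
def schurSystem {X : Type*} [DecidableEq X] (κ : Set (X × X)) :
    Set (lp (fun _ : X => ℂ) 2 →L[ℂ] lp (fun _ : X => ℂ) 2) :=
  let H := lp (fun _ : X => ℂ) 2
  {T : H →L[ℂ] H | (ContinuousLinearMapWOT.linearEquiv (σ := RingHom.id ℂ) (E := H) (F := H) ℂ).symm T ∈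
    closure (Submodule.span ℂ
      ((ContinuousLinearMapWOT.linearEquiv (σ := RingHom.id ℂ) (E := H) (F := H) ℂ).symm ''
        {A : H →L[ℂ] H | ∃ x y, (x, y) ∈ κ ∧ A = matrixUnit x y}) : Set (_ →WOT[ℂ] _))}

section aux

open Filter Topology

variable {X : Type*} [DecidableEq X]

lemma inner_basisVec_left (a : X) (f : lp (fun _ : X => ℂ) 2) :
    ⟪basisVec a, f⟫_ℂ = f a := by
  simp [basisVec, lp.inner_single_left]

lemma inner_basisVec_right (a : X) (f : lp (fun _ : X => ℂ) 2) :
    ⟪f, basisVec a⟫_ℂ = (starRingEnd ℂ) (f a) := by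
  simp [basisVec, lp.inner_single_right]

lemma matrixUnit_apply (a b : X) (v : lp (fun _ : X => ℂ) 2) :
    matrixUnit a b v = ⟪basisVec b, v⟫_ℂ • basisVec a := rfl

lemma basisVec_apply (a j : X) : basisVec (X := X) a j = if j = a then 1 else 0 := by
  by_cases h : j = a
  · subst h; simp [basisVec, lp.single_apply_self]
  · simp [basisVec, lp.single_apply_ne _ _ _ h, h]

lemma tendsto_truncation (w : lp (fun _ : X => ℂ) 2) :
    Tendsto (fun F : Finset X => ∑ a ∈ F, w a • basisVec a) atTop (𝓝 w) := by
  have h1 : HasSum (fun i => lp.single 2 i (w i)) w :=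
    lp.hasSum_single (by norm_num) w
  have h2 : ∀ i : X, w i • basisVec i = lp.single 2 i (w i) := by
    intro i
    rw [basisVec, ← lp.single_smul]
    simp
  exact (h1.congr_fun h2 : HasSum _ w)

lemma key_inner (T : lp (fun _ : X => ℂ) 2 →L[ℂ] lp (fun _ : X => ℂ) 2)
    (u v : lp (fun _ : X => ℂ) 2) (F : Finset X) :
    ⟪u, (∑ p ∈ F ×ˢ F, (⟪basisVec p.1, T (basisVec p.2)⟫_ℂ) • matrixUnit p.1 p.2) v⟫_ℂ
      = ⟪∑ a ∈ F, u a • basisVec a, T (∑ b ∈ F, v b • basisVec b)⟫_ℂ := by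
  simp only [ContinuousLinearMap.sum_apply, ContinuousLinearMap.coe_smul', Pi.smul_apply,
    inner_sum, sum_inner, inner_smul_left, inner_smul_right, map_sum, map_smul,
    matrixUnit_apply, inner_basisVec_left, inner_basisVec_right]
  rw [Finset.sum_product, Finset.sum_comm]
  refine Finset.sum_congr rfl fun a _ => ?_
  rw [Finset.mul_sum]
  refine Finset.sum_congr rfl fun b _ => ?_
  ring

end aux

open Filter Topology in
/-- `T ∈ S(κ)` iff the matrix entries `⟪T e_y, e_x⟫` of `T` vanish off `κ`. -/
theorem stmt_8 {X : Type*} [DecidableEq X] (κ : Set (X × X))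
    (T : lp (fun _ : X => ℂ) 2 →L[ℂ] lp (fun _ : X => ℂ) 2) :
    T ∈ schurSystem κ ↔ ∀ x y : X, (x, y) ∉ κ → ⟪basisVec x, T (basisVec y)⟫_ℂ = 0 := by
  classical
  constructor
  · intro hT x y hxy
    let ψ : (lp (fun _ : X => ℂ) 2 →WOT[ℂ] lp (fun _ : X => ℂ) 2) →ₗ[ℂ] ℂ :=
      { toFun := fun A => ⟪basisVec x, A (basisVec y)⟫_ℂ
        map_add' := fun A B => by
          simp [ContinuousLinearMapWOT.add_apply, inner_add_right]
        map_smul' := fun c A => by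
          simp [ContinuousLinearMapWOT.smul_apply, inner_smul_right] }
    have hcont : Continuous ψ :=
      ContinuousLinearMapWOT.continuous_dual_apply (basisVec y) (innerSL ℂ (basisVec x))
    have hclosed : IsClosed (LinearMap.ker ψ :
        Set (lp (fun _ : X => ℂ) 2 →WOT[ℂ] lp (fun _ : X => ℂ) 2)) := by
      have : (LinearMap.ker ψ : Set _) = ψ ⁻¹' {0} := by
        ext A; simp [LinearMap.mem_ker]
      rw [this]
      exact isClosed_singleton.preimage hcont
    have hgen : ((ContinuousLinearMapWOT.linearEquiv (σ := RingHom.id ℂ) (E := lp (fun _ : X => ℂ) 2) (F := lp (fun _ : X => ℂ) 2) ℂ).symm) ''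
        {A : lp (fun _ : X => ℂ) 2 →L[ℂ] lp (fun _ : X => ℂ) 2 |
          ∃ x y, (x, y) ∈ κ ∧ A = matrixUnit x y} ⊆ (LinearMap.ker ψ : Set _) := by
      rintro _ ⟨A, ⟨a, b, hab, rfl⟩, rfl⟩
      simp only [SetLike.mem_coe, LinearMap.mem_ker]
      show ⟪basisVec x, (matrixUnit a b) (basisVec y)⟫_ℂ = 0
      rw [matrixUnit_apply, inner_smul_right,
        inner_basisVec_left, inner_basisVec_left, basisVec_apply, basisVec_apply]
      by_cases hax : x = a
      · by_cases hby : b = y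
        · exact absurd (hax ▸ hby ▸ hab : (x, y) ∈ κ) hxy
        · simp [hby]
      · simp [hax]
    have hsub := closure_minimal (Submodule.span_le.mpr hgen) hclosed
    have := hsub hT
    simp only [ψ, LinearMap.mem_ker] at this
    exact this
  · intro h
    let c : X × X → ℂ := fun p => ⟪basisVec p.1, T (basisVec p.2)⟫_ℂ
    let A : Finset X → (lp (fun _ : X => ℂ) 2 →L[ℂ] lp (fun _ : X => ℂ) 2) :=
      fun F => ∑ p ∈ F ×ˢ F, c p • matrixUnit p.1 p.2
    have hmem : ∀ F : Finset X, ((ContinuousLinearMapWOT.linearEquiv (σ := RingHom.id ℂ) (E := lp (fun _ : X => ℂ) 2) (F := lp (fun _ : X => ℂ) 2) ℂ).symm) (A F) ∈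
        Submodule.span ℂ (((ContinuousLinearMapWOT.linearEquiv (σ := RingHom.id ℂ) (E := lp (fun _ : X => ℂ) 2) (F := lp (fun _ : X => ℂ) 2) ℂ).symm) ''
          {B : lp (fun _ : X => ℂ) 2 →L[ℂ] lp (fun _ : X => ℂ) 2 |
            ∃ x y, (x, y) ∈ κ ∧ B = matrixUnit x y}) := by
      intro F
      have h1 : ((ContinuousLinearMapWOT.linearEquiv (σ := RingHom.id ℂ) (E := lp (fun _ : X => ℂ) 2) (F := lp (fun _ : X => ℂ) 2) ℂ).symm) (A F)
          = ∑ p ∈ F ×ˢ F, c p • ((ContinuousLinearMapWOT.linearEquiv (σ := RingHom.id ℂ) (E := lp (fun _ : X => ℂ) 2) (F := lp (fun _ : X => ℂ) 2) ℂ).symm) (matrixUnit p.1 p.2) := by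
        rw [show (⇑(ContinuousLinearMapWOT.linearEquiv (σ := RingHom.id ℂ) (E := lp (fun _ : X => ℂ) 2) (F := lp (fun _ : X => ℂ) 2) ℂ).symm) = ⇑((ContinuousLinearMapWOT.linearEquiv (σ := RingHom.id ℂ) (E := lp (fun _ : X => ℂ) 2) (F := lp (fun _ : X => ℂ) 2) ℂ).symm).toLinearMap from rfl]
        rw [map_sum]
        exact Finset.sum_congr rfl fun p _ => map_smul _ _ _
      rw [h1]
      refine Submodule.sum_mem _ fun p hp => ?_
      by_cases hpκ : (p.1, p.2) ∈ κ
      · exact Submodule.smul_mem _ _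
          (Submodule.subset_span ⟨matrixUnit p.1 p.2, ⟨p.1, p.2, hpκ, rfl⟩, rfl⟩)
      · have hc : c p = 0 := h p.1 p.2 hpκ
        simp [hc]
    have htend : Tendsto (fun F : Finset X => ((ContinuousLinearMapWOT.linearEquiv (σ := RingHom.id ℂ) (E := lp (fun _ : X => ℂ) 2) (F := lp (fun _ : X => ℂ) 2) ℂ).symm) (A F)) atTop
        (𝓝 (((ContinuousLinearMapWOT.linearEquiv (σ := RingHom.id ℂ) (E := lp (fun _ : X => ℂ) 2) (F := lp (fun _ : X => ℂ) 2) ℂ).symm) T)) := by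
      rw [ContinuousLinearMapWOT.tendsto_iff_forall_inner_apply_tendsto]
      intro v u
      have hkey : ∀ F : Finset X,
          ⟪u, (((ContinuousLinearMapWOT.linearEquiv (σ := RingHom.id ℂ) (E := lp (fun _ : X => ℂ) 2) (F := lp (fun _ : X => ℂ) 2) ℂ).symm) (A F)) v⟫_ℂ
            = ⟪∑ a ∈ F, u a • basisVec a, T (∑ b ∈ F, v b • basisVec b)⟫_ℂ := by
        intro F
        show ⟪u, (A F) v⟫_ℂ = _
        exact key_inner T u v F
      rw [Filter.tendsto_congr hkey]
      have hv : Tendsto (fun F : Finset X => T (∑ b ∈ F, v b • basisVec b))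
          atTop (𝓝 (T v)) := (T.continuous.tendsto v).comp (tendsto_truncation v)
      have h2 : ⟪u, (((ContinuousLinearMapWOT.linearEquiv (σ := RingHom.id ℂ) (E := lp (fun _ : X => ℂ) 2) (F := lp (fun _ : X => ℂ) 2) ℂ).symm) T) v⟫_ℂ = ⟪u, T v⟫_ℂ := rfl
      rw [h2]
      exact Filter.Tendsto.inner (𝕜 := ℂ) (tendsto_truncation u) hv
    exact mem_closure_of_tendsto htend (Filter.Eventually.of_forall hmem)

end
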